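/- Let p be a prime, n ≥ 2, and f, g ∈ ℤ_p[x_1,…,x_n]. Let k, l be positive integers with k ≥ l. Let a ∈ ℤ_p^n be such that f(a) ≡ 0 mod p, g(a) ≡ 0 mod p, and the 2×n Jacobian matrix with rows (∂f/∂x_1(a),…,∂f/∂x_n(a)) and (∂g/∂x_1(a),…,∂g/∂x_n(a)) has rank 2 modulo p. Then the set A_{k,l} = {x ∈ a + (pℤ_p)^n : f(x) ≡ 0 mod p^k and g(x) ≡ 0 mod p^l} has Haar measure μ(A_{k,l}) = p^{−n−k−l+2}. -/

import Mathlib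

open MeasureTheory MvPolynomial

/-! Lemma `notAkl`: the measure of
`A_{k,l} = {x ∈ a+(pℤ_p)^n : f(x) ≡ 0 mod p^k, g(x) ≡ 0 mod p^l}` equals
`p^{-n-k-l+2}` when the Jacobian of `(f,g)` at `a` has rank `2` modulo `p`. -/

noncomputable instance (p : ℕ) [Fact p.Prime] : MeasurableSpace ℤ_[p] := borel _
instance (p : ℕ) [Fact p.Prime] : BorelSpace ℤ_[p] := ⟨rfl⟩

/-- The Haar measure on `ℤ_p^n`, normalized so that `μ(ℤ_p^n) = 1`. -/
noncomputable def padicHaar (p : ℕ) [Fact p.Prime] (n : ℕ) : Measure (Fin n → ℤ_[p]) :=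
  Measure.addHaarMeasure ⟨⟨Set.univ, isCompact_univ⟩, by simp⟩

set_option linter.unusedSectionVars false

namespace Akl
variable (p : ℕ) [Fact p.Prime] (n : ℕ)

instance : (padicHaar p n).IsAddLeftInvariant := by unfold padicHaar; infer_instance

lemma haar_univ : padicHaar p n Set.univ = 1 := by
  have := Measure.addHaarMeasure_self (K₀ := (⟨⟨Set.univ, isCompact_univ⟩, by simp⟩ :
    TopologicalSpace.PositiveCompacts (Fin n → ℤ_[p])))
  simpa [padicHaar] using this


variable {p n}

/-- reduction map mod p^m -/
noncomputable def red (m : ℕ) (x : Fin n → ℤ_[p]) : Fin n → ZMod (p ^ m) :=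
  fun i => PadicInt.toZModPow m (x i)

lemma toZModPow_eq_iff (m : ℕ) (z w : ℤ_[p]) :
    PadicInt.toZModPow m z = PadicInt.toZModPow m w ↔ (p : ℤ_[p]) ^ m ∣ z - w := by
  rw [← sub_eq_zero, ← map_sub, ← RingHom.mem_ker, PadicInt.ker_toZModPow,
    Ideal.mem_span_singleton]

lemma toZMod_eq_iff (z w : ℤ_[p]) :
    PadicInt.toZMod z = PadicInt.toZMod w ↔ (p : ℤ_[p]) ∣ z - w := by
  rw [← sub_eq_zero, ← map_sub, ← RingHom.mem_ker, PadicInt.ker_toZMod,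
    PadicInt.maximalIdeal_eq_span_p, Ideal.mem_span_singleton]

lemma red_eq_iff (m : ℕ) (x y : Fin n → ℤ_[p]) :
    red m x = red m y ↔ ∀ i, (p : ℤ_[p]) ^ m ∣ x i - y i := by
  simp only [red, funext_iff, toZModPow_eq_iff]

lemma red_surjective (m : ℕ) : Function.Surjective (red (p := p) (n := n) m) := by
  intro c
  choose z hz using fun i => ZMod.ringHom_surjective (PadicInt.toZModPow (p := p) m) (c i)
  exact ⟨z, funext fun i => hz i⟩

lemma measurableSet_fiber (m : ℕ) (c : Fin n → ZMod (p ^ m)) :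
    MeasurableSet {x : Fin n → ℤ_[p] | red m x = c} := by
  obtain ⟨x₀, rfl⟩ := red_surjective m c
  have : {x : Fin n → ℤ_[p] | red m x = red m x₀}
      = ⋂ i, (fun x : Fin n → ℤ_[p] => x i) ⁻¹' Metric.closedBall (x₀ i) ((p : ℝ) ^ (-(m:ℤ))) := by
    ext x
    simp only [red_eq_iff, Set.mem_iInter, Set.mem_preimage, Metric.mem_closedBall,
      dist_eq_norm]
    refine forall_congr' fun i => ?_
    rw [PadicInt.norm_le_pow_iff_mem_span_pow, Ideal.mem_span_singleton]
  rw [this]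
  exact MeasurableSet.iInter fun i =>
    (measurable_pi_apply i) measurableSet_closedBall

lemma measure_fiber_eq (m : ℕ) (c d : Fin n → ZMod (p ^ m)) :
    padicHaar p n {x | red m x = c} = padicHaar p n {x | red m x = d} := by
  obtain ⟨zc, rfl⟩ := red_surjective m c
  obtain ⟨zd, rfl⟩ := red_surjective m d
  have key : (fun x => (zd - zc) + x) ⁻¹' {x : Fin n → ℤ_[p] | red m x = red m zd}
      = {x | red m x = red m zc} := by
    ext x
    simp only [Set.mem_preimage, Set.mem_setOf_eq, red_eq_iff]
    refine forall_congr' fun i => ?_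
    constructor
    · intro h
      have h2 : (zd - zc + x) i - zd i = x i - zc i := by simp [Pi.add_apply, Pi.sub_apply]; ring
      rwa [h2] at h
    · intro h
      have h2 : (zd - zc + x) i - zd i = x i - zc i := by simp [Pi.add_apply, Pi.sub_apply]; ring
      rwa [h2]
  calc padicHaar p n {x | red m x = red m zc}
      = padicHaar p n ((fun x => (zd - zc) + x) ⁻¹' {x : Fin n → ℤ_[p] | red m x = red m zd}) := by
        rw [key]
    _ = padicHaar p n {x | red m x = red m zd} := by
        exact measure_preimage_add _ _ _

lemma pq_ne_zero : (p : ENNReal) ≠ 0 := by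
  exact_mod_cast (Fact.out : p.Prime).ne_zero

lemma pq_ne_top : (p : ENNReal) ≠ ⊤ := ENNReal.natCast_ne_top p

lemma measure_fiber (m : ℕ) (c : Fin n → ZMod (p ^ m)) :
    padicHaar p n {x | red m x = c} = (p : ENNReal) ^ (-((m * n : ℕ) : ℤ)) := by
  classical
  have hcard : Fintype.card (Fin n → ZMod (p ^ m)) = p ^ (m * n) := by
    rw [Fintype.card_fun, ZMod.card, Fintype.card_fin, ← pow_mul]
  have hunion : (⋃ d : Fin n → ZMod (p ^ m), {x : Fin n → ℤ_[p] | red m x = d}) = Set.univ := by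
    ext x; simp only [Set.mem_iUnion, Set.mem_setOf_eq, Set.mem_univ, iff_true]
    exact ⟨red m x, rfl⟩
  have hdisj : Pairwise (Function.onFun Disjoint
      (fun d : Fin n → ZMod (p ^ m) => {x : Fin n → ℤ_[p] | red m x = d})) := by
    intro d d' hdd'
    refine Set.disjoint_left.2 fun x hx hx' => hdd' ?_
    exact hx.symm.trans hx'
  have hsum : (1 : ENNReal) = ∑ d : Fin n → ZMod (p ^ m), padicHaar p n {x | red m x = d} := by
    rw [← haar_univ p n, ← hunion, measure_iUnion hdisj (fun d => measurableSet_fiber m d),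
      tsum_fintype]
  have hconst : ∀ d : Fin n → ZMod (p ^ m),
      padicHaar p n {x | red m x = d} = padicHaar p n {x | red m x = c} :=
    fun d => measure_fiber_eq m d c
  rw [Finset.sum_congr rfl (fun d _ => hconst d), Finset.sum_const, Finset.card_univ,
    hcard] at hsum
  have hne : ((p : ENNReal) ^ (m * n)) ≠ 0 := pow_ne_zero _ pq_ne_zero
  have hnt : ((p : ENNReal) ^ (m * n)) ≠ ⊤ := by
    exact ENNReal.pow_ne_top pq_ne_top
  have hsum' : ((p : ENNReal) ^ (m * n)) * padicHaar p n {x | red m x = c} = 1 := by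
    rw [hsum]
    ring
  calc padicHaar p n {x | red m x = c}
      = ((p : ENNReal) ^ (m * n))⁻¹ * (((p : ENNReal) ^ (m * n)) * padicHaar p n {x | red m x = c}) := by
        rw [← mul_assoc, ENNReal.inv_mul_cancel hne hnt, one_mul]
    _ = ((p : ENNReal) ^ (m * n))⁻¹ := by rw [hsum', mul_one]
    _ = (p : ENNReal) ^ (-((m * n : ℕ) : ℤ)) := by
        rw [ENNReal.zpow_neg, zpow_natCast]

lemma measure_preimage (m : ℕ) (S : Set (Fin n → ZMod (p ^ m))) :
    padicHaar p n (red m ⁻¹' S) = (Nat.card S) * (p : ENNReal) ^ (-((m * n : ℕ) : ℤ)) := by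
  classical
  have hS : S.Finite := Set.toFinite S
  have : red (p := p) (n := n) m ⁻¹' S = ⋃ c ∈ hS.toFinset, {x | red m x = c} := by
    ext x
    simp only [Set.mem_preimage, Set.mem_iUnion, Set.Finite.mem_toFinset, Set.mem_setOf_eq]
    constructor
    · intro h; exact ⟨red m x, h, rfl⟩
    · rintro ⟨c, hc, rfl⟩; exact hc
  rw [this, measure_biUnion_finset ?_ (fun c _ => measurableSet_fiber m c)]
  · rw [Finset.sum_congr rfl (fun c _ => measure_fiber m c), Finset.sum_const,
      Set.Finite.card_toFinset, nsmul_eq_mul]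
    congr 1
    rw [Nat.card_eq_card_toFinset]
    simp [Set.toFinset]
  · intro c hc d hd hcd
    refine Set.disjoint_left.2 fun x hx hx' => hcd ?_
    exact hx.symm.trans hx'



lemma taylor_aux {R : Type*} [CommRing R] {n : ℕ} (f : MvPolynomial (Fin n) R)
    (x τ : Fin n → R) (c : R) :
    ∃ r : R, eval (fun i => x i + c * τ i) f
      = eval x f + c * (∑ i, τ i * eval x (pderiv i f)) + c ^ 2 * r := by
  induction f using MvPolynomial.induction_on with
  | C a => exact ⟨0, by simp⟩
  | add f g hf hg =>
    obtain ⟨r₁, h₁⟩ := hf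
    obtain ⟨r₂, h₂⟩ := hg
    refine ⟨r₁ + r₂, ?_⟩
    simp only [map_add, h₁, h₂, mul_add, Finset.sum_add_distrib]
    ring
  | mul_X f i hf =>
    obtain ⟨r, hr⟩ := hf
    refine ⟨(∑ j, τ j * eval x (pderiv j f)) * τ i + r * x i + c * r * τ i, ?_⟩
    have hsum : ∀ j, τ j * eval x (pderiv j (f * X i))
        = τ j * eval x (pderiv j f) * x i + (if i = j then τ j * eval x f else 0) := by
      intro j
      rw [pderiv_mul, pderiv_X]
      rcases eq_or_ne i j with h | h
      · subst h; simp [Pi.single_apply]; ring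
      · simp [Pi.single_apply, h, Ne.symm h]; ring
    rw [map_mul, eval_X, hr, map_mul, eval_X]
    rw [Finset.sum_congr rfl (fun j _ => hsum j), Finset.sum_add_distrib,
      Finset.sum_ite_eq (Finset.univ : Finset (Fin n)) i (fun j => τ j * eval x f)]
    simp only [Finset.mem_univ, if_true, ← Finset.sum_mul]
    ring

lemma card_affine {F : Type*} [Field F] [Fintype F] {e n : ℕ}
    (M : Matrix (Fin e) (Fin n) F) (hsurj : Function.Surjective M.mulVec)
    (b : Fin e → F) :
    Nat.card {t : Fin n → F | M.mulVec t = b} = Fintype.card F ^ (n - e) := by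
  classical
  obtain ⟨t₀, ht₀⟩ := hsurj b
  have hs : Function.Surjective M.mulVecLin := by
    simpa [Matrix.coe_mulVecLin] using hsurj
  have hrange : LinearMap.range M.mulVecLin = ⊤ := LinearMap.range_eq_top.2 hs
  have hrank : Module.finrank F (LinearMap.ker M.mulVecLin) = n - e := by
    have h1 := LinearMap.finrank_range_add_finrank_ker M.mulVecLin
    rw [hrange, finrank_top] at h1
    have h2 : Module.finrank F (Fin e → F) = e := by simp
    have h3 : Module.finrank F (Fin n → F) = n := by simp
    omega
  have hequiv : {t : Fin n → F | M.mulVec t = b} ≃ LinearMap.ker M.mulVecLin :=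
    { toFun := fun t => ⟨t.1 - t₀, by
        have := t.2
        simp only [Set.mem_setOf_eq] at this
        simp [LinearMap.mem_ker, Matrix.mulVecLin_apply, Matrix.mulVec_sub, this, ht₀]⟩
      invFun := fun t => ⟨t.1 + t₀, by
        have := t.2
        simp only [LinearMap.mem_ker, Matrix.mulVecLin_apply] at this
        simp [Set.mem_setOf_eq, Matrix.mulVec_add, this, ht₀]⟩
      left_inv := fun t => by ext; simp
      right_inv := fun t => by ext; simp }
  rw [Nat.card_congr hequiv, ← hrank]
  have : Nat.card (LinearMap.ker M.mulVecLin) = Fintype.card (LinearMap.ker M.mulVecLin) :=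
    Nat.card_eq_fintype_card
  rw [this, Module.card_eq_pow_finrank (K := F)]

lemma dvd_iff_toZMod_eq_zero (z : ℤ_[p]) : (p : ℤ_[p]) ∣ z ↔ PadicInt.toZMod z = 0 := by
  simpa using (toZMod_eq_iff z 0).symm

/-- lift from ZMod p to ℤ_p -/
noncomputable def lft (z : ZMod p) : ℤ_[p] := ((z.val : ℕ) : ℤ_[p])

lemma toZMod_lft (z : ZMod p) : PadicInt.toZMod (lft z) = z := by
  have : NeZero p := ⟨(Fact.out : p.Prime).ne_zero⟩
  rw [lft, map_natCast]
  exact ZMod.natCast_rightInverse z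

lemma toZMod_eval_congr (x y : Fin n → ℤ_[p]) (h : ∀ i, (p : ℤ_[p]) ∣ x i - y i)
    (f : MvPolynomial (Fin n) ℤ_[p]) :
    PadicInt.toZMod (eval x f) = PadicInt.toZMod (eval y f) := by
  have hx : (PadicInt.toZMod (p := p)) ∘ x = (PadicInt.toZMod (p := p)) ∘ y :=
    funext fun i => (toZMod_eq_iff _ _).2 (h i)
  have e1 := eval₂_comp_left (PadicInt.toZMod (p := p)) (RingHom.id ℤ_[p]) x f
  have e2 := eval₂_comp_left (PadicInt.toZMod (p := p)) (RingHom.id ℤ_[p]) y f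
  simp only [eval₂_id] at e1 e2
  rw [e1, e2, hx]

lemma eval_congr_dvd (m : ℕ) (x y : Fin n → ℤ_[p]) (h : ∀ i, (p : ℤ_[p]) ^ m ∣ x i - y i)
    (f : MvPolynomial (Fin n) ℤ_[p]) :
    (p : ℤ_[p]) ^ m ∣ eval x f - eval y f := by
  rw [← toZModPow_eq_iff]
  have hx : (PadicInt.toZModPow (p := p) m) ∘ x = (PadicInt.toZModPow (p := p) m) ∘ y :=
    funext fun i => (toZModPow_eq_iff m _ _).2 (h i)
  have e1 := eval₂_comp_left (PadicInt.toZModPow (p := p) m) (RingHom.id ℤ_[p]) x f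
  have e2 := eval₂_comp_left (PadicInt.toZModPow (p := p) m) (RingHom.id ℤ_[p]) y f
  simp only [eval₂_id] at e1 e2
  rw [e1, e2, hx]

lemma ppow_ne_zero (m : ℕ) : ((p : ℤ_[p]) ^ m) ≠ 0 := by
  apply pow_ne_zero
  exact_mod_cast Nat.cast_ne_zero.2 (Fact.out : p.Prime).ne_zero

/-- Taylor-type divisibility criterion. -/
lemma taylor_dvd (fs : MvPolynomial (Fin n) ℤ_[p]) (m : ℕ) (hm : 1 ≤ m)
    (x₀ τ : Fin n → ℤ_[p]) (u : ℤ_[p]) (hu : eval x₀ fs = (p : ℤ_[p]) ^ m * u) :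
    ((p : ℤ_[p]) ^ (m + 1) ∣ eval (fun i => x₀ i + (p : ℤ_[p]) ^ m * τ i) fs)
      ↔ (p : ℤ_[p]) ∣ u + ∑ i, τ i * eval x₀ (pderiv i fs) := by
  obtain ⟨r, hr⟩ := taylor_aux fs x₀ τ ((p : ℤ_[p]) ^ m)
  have hexp : (((p : ℤ_[p]) ^ m) ^ 2) = (p : ℤ_[p]) ^ (m + 1) * (p : ℤ_[p]) ^ (m - 1) := by
    rw [← pow_mul, ← pow_add]
    congr 1
    omega
  have heq : eval (fun i => x₀ i + (p : ℤ_[p]) ^ m * τ i) fs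
      = (p : ℤ_[p]) ^ m * (u + ∑ i, τ i * eval x₀ (pderiv i fs))
        + (p : ℤ_[p]) ^ (m + 1) * ((p : ℤ_[p]) ^ (m - 1) * r) := by
    rw [hr, hu, hexp]; ring
  rw [heq]
  have h1 : (p : ℤ_[p]) ^ (m + 1) ∣ (p : ℤ_[p]) ^ (m + 1) * ((p : ℤ_[p]) ^ (m - 1) * r) :=
    Dvd.intro _ rfl
  rw [dvd_add_left h1, pow_succ]
  exact mul_dvd_mul_iff_left (ppow_ne_zero m)

lemma mem_L_iff (e : ℕ) (F : Fin e → MvPolynomial (Fin n) ℤ_[p]) (x₀ : Fin n → ℤ_[p])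
    (u : Fin e → ℤ_[p]) (t : Fin n → ZMod p) :
    (Matrix.of fun s i => PadicInt.toZMod (eval x₀ (pderiv i (F s)))).mulVec t
        = (fun s => - PadicInt.toZMod (u s))
      ↔ ∀ s, (p : ℤ_[p]) ∣ u s + ∑ i, lft (t i) * eval x₀ (pderiv i (F s)) := by
  rw [funext_iff]
  refine forall_congr' fun s => ?_
  rw [dvd_iff_toZMod_eq_zero, map_add, map_sum]
  have hterm : ∀ i, PadicInt.toZMod (lft (t i) * eval x₀ (pderiv i (F s)))
      = PadicInt.toZMod (eval x₀ (pderiv i (F s))) * t i := by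
    intro i; rw [map_mul, toZMod_lft, mul_comm]
  rw [Finset.sum_congr rfl fun i _ => hterm i]
  have hmv : (Matrix.of fun s i => PadicInt.toZMod (eval x₀ (pderiv i (F s)))).mulVec t s
      = ∑ i, PadicInt.toZMod (eval x₀ (pderiv i (F s))) * t i := by
    simp [Matrix.mulVec, dotProduct]
  rw [hmv]
  constructor
  · intro h; rw [h]; ring
  · intro h; linear_combination h

/-- The key step: measure of one coset refined by `e` new congruence conditions. -/
lemma step (e : ℕ) (he : e ≤ n) (F : Fin e → MvPolynomial (Fin n) ℤ_[p]) (m : ℕ) (hm : 1 ≤ m)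
    (x₀ : Fin n → ℤ_[p]) (u : Fin e → ℤ_[p]) (hu : ∀ s, eval x₀ (F s) = (p : ℤ_[p]) ^ m * u s)
    (hsurj : Function.Surjective
      (Matrix.of fun s i => PadicInt.toZMod (eval x₀ (pderiv i (F s)))).mulVec) :
    padicHaar p n {x | red m x = red m x₀ ∧ ∀ s, (p : ℤ_[p]) ^ (m + 1) ∣ eval x (F s)}
      = (p : ENNReal) ^ ((n : ℤ) - (e : ℤ) - (((m + 1) * n : ℕ) : ℤ)) := by
  classical
  set M : Matrix (Fin e) (Fin n) (ZMod p) :=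
    Matrix.of fun s i => PadicInt.toZMod (eval x₀ (pderiv i (F s))) with hM
  set b : Fin e → ZMod p := fun s => - PadicInt.toZMod (u s) with hb
  set L : Set (Fin n → ZMod p) := {t | M.mulVec t = b} with hL
  set y : (Fin n → ZMod p) → (Fin n → ℤ_[p]) :=
    fun t i => x₀ i + (p : ℤ_[p]) ^ m * lft (t i) with hy
  -- membership criterion for L
  have hLmem : ∀ t, t ∈ L ↔ ∀ s, (p : ℤ_[p]) ∣ u s + ∑ i, lft (t i) * eval x₀ (pderiv i (F s)) :=
    fun t => mem_L_iff e F x₀ u t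
  -- key equivalence
  have key : ∀ x, (red m x = red m x₀ ∧ ∀ s, (p : ℤ_[p]) ^ (m + 1) ∣ eval x (F s))
      ↔ ∃ t ∈ L, red (m + 1) x = red (m + 1) (y t) := by
    intro x
    constructor
    · rintro ⟨h1, h2⟩
      rw [red_eq_iff] at h1
      choose τ hτ using h1
      set t : Fin n → ZMod p := fun i => PadicInt.toZMod (τ i) with ht
      have hxy : x = fun i => x₀ i + (p : ℤ_[p]) ^ m * τ i := by
        funext i
        have := hτ i
        linear_combination this
      have hdvdτ : ∀ s, (p : ℤ_[p]) ∣ u s + ∑ i, τ i * eval x₀ (pderiv i (F s)) := by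
        intro s
        rw [← taylor_dvd (F s) m hm x₀ τ (u s) (hu s), ← hxy]
        exact h2 s
      have hlift : ∀ i, (p : ℤ_[p]) ∣ lft (t i) - τ i := by
        intro i
        rw [← toZMod_eq_iff, toZMod_lft]
      have htL : t ∈ L := by
        rw [hLmem]
        intro s
        have hd : (p : ℤ_[p]) ∣ ∑ i, (lft (t i) - τ i) * eval x₀ (pderiv i (F s)) :=
          Finset.dvd_sum fun i _ => Dvd.dvd.mul_right (hlift i) _
        have : u s + ∑ i, lft (t i) * eval x₀ (pderiv i (F s))
            = (u s + ∑ i, τ i * eval x₀ (pderiv i (F s)))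
              + ∑ i, (lft (t i) - τ i) * eval x₀ (pderiv i (F s)) := by
          rw [add_assoc, ← Finset.sum_add_distrib]
          congr 1
          refine Finset.sum_congr rfl fun i _ => ?_
          ring
        rw [this]
        exact dvd_add (hdvdτ s) hd
      refine ⟨t, htL, ?_⟩
      rw [red_eq_iff]
      intro i
      have : x i - y t i = (p : ℤ_[p]) ^ m * (τ i - lft (t i)) := by
        rw [hy]
        simp only
        rw [hxy]
        simp only
        ring
      rw [this, pow_succ]
      exact mul_dvd_mul_left _ ((dvd_sub_comm).1 (hlift i))
    · rintro ⟨t, htL, hred⟩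
      rw [red_eq_iff] at hred
      have hyF : ∀ s, (p : ℤ_[p]) ^ (m + 1) ∣ eval (y t) (F s) := by
        intro s
        have := (hLmem t).1 htL s
        have h2 := (taylor_dvd (F s) m hm x₀ (fun i => lft (t i)) (u s) (hu s)).2 this
        exact h2
      constructor
      · rw [red_eq_iff]
        intro i
        have h1 : (p : ℤ_[p]) ^ m ∣ x i - y t i :=
          dvd_trans (pow_dvd_pow _ (Nat.le_succ m)) (hred i)
        have h2 : (p : ℤ_[p]) ^ m ∣ y t i - x₀ i := by
          rw [hy]
          simp only [add_sub_cancel_left]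
          exact Dvd.intro _ rfl
        have := dvd_add h1 h2
        rwa [sub_add_sub_cancel] at this
      · intro s
        have h1 : (p : ℤ_[p]) ^ (m + 1) ∣ eval x (F s) - eval (y t) (F s) :=
          eval_congr_dvd (m + 1) x (y t) hred (F s)
        have := dvd_add h1 (hyF s)
        rwa [sub_add_cancel] at this
  -- injectivity of t ↦ red (m+1) (y t)
  have hinj : Function.Injective (fun t => red (m + 1) (y t)) := by
    intro t t' htt'
    have h := (red_eq_iff (m + 1) (y t) (y t')).1 htt'
    funext i
    have h2 : y t i - y t' i = (p : ℤ_[p]) ^ m * (lft (t i) - lft (t' i)) := by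
      rw [hy]; simp only; ring
    have h3 := h i
    rw [h2, pow_succ] at h3
    have h4 : (p : ℤ_[p]) ∣ lft (t i) - lft (t' i) :=
      (mul_dvd_mul_iff_left (ppow_ne_zero m)).1 h3
    have h5 := (toZMod_eq_iff _ _).2 h4
    rwa [toZMod_lft, toZMod_lft] at h5
  -- the set is a preimage
  have hset : {x | red m x = red m x₀ ∧ ∀ s, (p : ℤ_[p]) ^ (m + 1) ∣ eval x (F s)}
      = red (m + 1) ⁻¹' ((fun t => red (m + 1) (y t)) '' L) := by
    ext x
    rw [Set.mem_preimage, Set.mem_setOf_eq, key x]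
    constructor
    · rintro ⟨t, htL, hredx⟩; exact ⟨t, htL, hredx.symm⟩
    · rintro ⟨t, htL, hredx⟩; exact ⟨t, htL, hredx.symm⟩
  -- counting
  have hcardS : Nat.card ((fun t => red (m + 1) (y t)) '' L) = p ^ (n - e) := by
    rw [Nat.card_coe_set_eq, Set.ncard_image_of_injective L hinj,
      ← Nat.card_coe_set_eq, hL]
    rw [card_affine M hsurj b, ZMod.card]
  rw [hset, measure_preimage, hcardS]
  have hcast : ((p ^ (n - e) : ℕ) : ENNReal) = (p : ENNReal) ^ (((n - e : ℕ) : ℤ)) := by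
    push_cast
    rw [zpow_natCast]
  rw [hcast, ← ENNReal.zpow_add pq_ne_zero pq_ne_top]
  congr 1
  omega

lemma measurableSet_red_preimage (m : ℕ) (S : Set (Fin n → ZMod (p ^ m))) :
    MeasurableSet (red m ⁻¹' S) := by
  have h : red (p := p) (n := n) m ⁻¹' S = ⋃ c ∈ S, {x | red m x = c} := by
    ext x
    simp only [Set.mem_preimage, Set.mem_iUnion, Set.mem_setOf_eq]
    exact ⟨fun h => ⟨red m x, h, rfl⟩, fun ⟨c, hc, h⟩ => h ▸ hc⟩
  rw [h]
  exact MeasurableSet.biUnion (Set.to_countable S) fun c _ => measurableSet_fiber m c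

section main
variable (f g : MvPolynomial (Fin n) ℤ_[p]) (a : Fin n → ℤ_[p])

/-- the sets `B_{m,j}` -/
def Bset (m j : ℕ) : Set (Fin n → ℤ_[p]) :=
  {x | (∀ i, (p : ℤ_[p]) ∣ (x i - a i)) ∧
    (p : ℤ_[p]) ^ m ∣ eval x f ∧ (p : ℤ_[p]) ^ j ∣ eval x g}

variable {f g a}

lemma mem_of_red_eq {m j : ℕ} (hm : 1 ≤ m) (hjm : j ≤ m) {x y : Fin n → ℤ_[p]}
    (hx : x ∈ Bset f g a m j) (hxy : red m y = red m x) : y ∈ Bset f g a m j := by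
  rw [red_eq_iff] at hxy
  obtain ⟨ha, hf, hg⟩ := hx
  refine ⟨fun i => ?_, ?_, ?_⟩
  · have h1 : (p : ℤ_[p]) ∣ y i - x i :=
      dvd_trans (dvd_pow_self _ (by omega : m ≠ 0)) (hxy i)
    have := dvd_add h1 (ha i)
    rwa [sub_add_sub_cancel] at this
  · have h1 : (p : ℤ_[p]) ^ m ∣ eval y f - eval x f := eval_congr_dvd m y x hxy f
    have := dvd_add h1 hf
    rwa [sub_add_cancel] at this
  · have h1 : (p : ℤ_[p]) ^ j ∣ eval y g - eval x g :=
      dvd_trans (pow_dvd_pow _ hjm) (eval_congr_dvd m y x hxy g)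
    have := dvd_add h1 hg
    rwa [sub_add_cancel] at this

lemma B_eq_preimage {m j : ℕ} (hm : 1 ≤ m) (hjm : j ≤ m) :
    Bset f g a m j = red m ⁻¹' (red m '' Bset f g a m j) := by
  ext x
  constructor
  · intro hx
    exact ⟨x, hx, rfl⟩
  · rintro ⟨x', hx', hredx⟩
    exact mem_of_red_eq hm hjm hx' hredx.symm

lemma measurable_B {m j : ℕ} (hm : 1 ≤ m) (hjm : j ≤ m) :
    MeasurableSet (Bset f g a m j) := by
  rw [B_eq_preimage hm hjm]
  exact measurableSet_red_preimage m _

section rank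
variable (hrank : Matrix.rank (Matrix.of fun (i : Fin 2) (j : Fin n) =>
      PadicInt.toZMod (eval a (pderiv j (![f, g] i)))) = 2)

include hrank

lemma surj2 : Function.Surjective
    (Matrix.of fun (s : Fin 2) (i : Fin n) =>
      PadicInt.toZMod (eval a (pderiv i (![f, g] s)))).mulVec := by
  classical
  set M := Matrix.of fun (s : Fin 2) (i : Fin n) =>
      PadicInt.toZMod (eval a (pderiv i (![f, g] s))) with hM
  have h1 : Module.finrank (ZMod p) (LinearMap.range M.mulVecLin) = 2 := hrank
  have htop : LinearMap.range M.mulVecLin = ⊤ := by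
    apply Submodule.eq_top_of_finrank_eq
    rw [h1]
    simp
  intro b
  have : b ∈ LinearMap.range M.mulVecLin := htop ▸ Submodule.mem_top
  obtain ⟨t, ht⟩ := this
  exact ⟨t, by simpa [Matrix.mulVecLin_apply] using ht⟩

lemma surj2_at (x₀ : Fin n → ℤ_[p]) (hx₀ : ∀ i, (p : ℤ_[p]) ∣ x₀ i - a i) :
    Function.Surjective
    (Matrix.of fun (s : Fin 2) (i : Fin n) =>
      PadicInt.toZMod (eval x₀ (pderiv i (![f, g] s)))).mulVec := by
  have hMeq : (Matrix.of fun (s : Fin 2) (i : Fin n) =>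
      PadicInt.toZMod (eval x₀ (pderiv i (![f, g] s))))
      = (Matrix.of fun (s : Fin 2) (i : Fin n) =>
      PadicInt.toZMod (eval a (pderiv i (![f, g] s)))) := by
    funext s i
    exact toZMod_eval_congr x₀ a hx₀ _
  rw [hMeq]
  exact surj2 hrank

lemma surj1_at (x₀ : Fin n → ℤ_[p]) (hx₀ : ∀ i, (p : ℤ_[p]) ∣ x₀ i - a i) :
    Function.Surjective
    (Matrix.of fun (s : Fin 1) (i : Fin n) =>
      PadicInt.toZMod (eval x₀ (pderiv i (![f] s)))).mulVec := by
  intro b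
  obtain ⟨t, ht⟩ := surj2_at hrank x₀ hx₀ ![b 0, 0]
  refine ⟨t, funext fun s => ?_⟩
  have hs : s = 0 := Subsingleton.elim s 0
  subst hs
  have h0 := congrFun ht 0
  simpa [Matrix.mulVec, dotProduct] using h0

lemma R1 (hn : 1 ≤ n) (m j : ℕ) (hj : 1 ≤ j) (hjm : j ≤ m) :
    padicHaar p n (Bset f g a (m + 1) j)
      = (p : ENNReal) ^ (-1 : ℤ) * padicHaar p n (Bset f g a m j) := by
  classical
  have hm : 1 ≤ m := hj.trans hjm
  set S := red m '' Bset f g a m j with hS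
  have hpre : Bset f g a m j = red m ⁻¹' S := B_eq_preimage hm hjm
  have hsub : Bset f g a (m + 1) j ⊆ Bset f g a m j := fun x hx =>
    ⟨hx.1, dvd_trans (pow_dvd_pow _ (Nat.le_succ m)) hx.2.1, hx.2.2⟩
  have hdecomp : Bset f g a (m + 1) j
      = ⋃ c ∈ (Set.toFinite S).toFinset, ({x | red m x = c} ∩ Bset f g a (m + 1) j) := by
    ext x
    simp only [Set.mem_iUnion, Set.Finite.mem_toFinset, Set.mem_inter_iff, Set.mem_setOf_eq,
      exists_prop]
    constructor
    · intro hx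
      exact ⟨red m x, ⟨x, hsub hx, rfl⟩, rfl, hx⟩
    · rintro ⟨c, _, _, hx⟩
      exact hx
  have hpiece : ∀ c ∈ S, padicHaar p n ({x | red m x = c} ∩ Bset f g a (m + 1) j)
      = (p : ENNReal) ^ ((n : ℤ) - (1 : ℤ) - (((m + 1) * n : ℕ) : ℤ)) := by
    rintro c ⟨x₀, hx₀, rfl⟩
    obtain ⟨uf, huf⟩ := hx₀.2.1
    have hseteq : {x | red m x = red m x₀} ∩ Bset f g a (m + 1) j
        = {x | red m x = red m x₀ ∧ ∀ s : Fin 1, (p : ℤ_[p]) ^ (m + 1) ∣ eval x (![f] s)} := by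
      ext x
      simp only [Set.mem_inter_iff, Set.mem_setOf_eq]
      constructor
      · rintro ⟨h1, h2⟩
        refine ⟨h1, fun s => ?_⟩
        have hs : s = 0 := Subsingleton.elim s 0
        subst hs
        simpa using h2.2.1
      · rintro ⟨h1, h2⟩
        have hmem : x ∈ Bset f g a m j := mem_of_red_eq hm hjm hx₀ h1
        refine ⟨h1, hmem.1, ?_, hmem.2.2⟩
        simpa using h2 0
    rw [hseteq]
    exact step 1 hn ![f] m hm x₀ ![uf]
      (fun s => by
        have hs : s = 0 := Subsingleton.elim s 0
        subst hs
        simpa using huf)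
      (surj1_at hrank x₀ hx₀.1)
  have hdisj : Set.PairwiseDisjoint ((Set.toFinite S).toFinset : Set (Fin n → ZMod (p ^ m)))
      (fun c => {x | red m x = c} ∩ Bset f g a (m + 1) j) := by
    intro c hc d hd hcd
    refine Set.disjoint_left.2 fun x hx hx' => hcd ?_
    exact hx.1.symm.trans hx'.1
  have hmeas : ∀ c ∈ (Set.toFinite S).toFinset,
      MeasurableSet ({x : Fin n → ℤ_[p] | red m x = c} ∩ Bset f g a (m + 1) j) :=
    fun c _ => (measurableSet_fiber m c).inter (measurable_B (by omega) (hjm.trans (Nat.le_succ m)))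
  rw [hdecomp, measure_biUnion_finset hdisj hmeas]
  rw [Finset.sum_congr rfl (fun c hc => hpiece c ((Set.Finite.mem_toFinset _).1 hc)),
    Finset.sum_const]
  have hcard : (Set.toFinite S).toFinset.card = Nat.card S := by
    rw [Nat.card_coe_set_eq, Set.ncard_eq_toFinset_card S (Set.toFinite S)]
  rw [hcard, hpre, measure_preimage, nsmul_eq_mul]
  have hzpow : (p : ENNReal) ^ ((n : ℤ) - (1 : ℤ) - (((m + 1) * n : ℕ) : ℤ))
      = (p : ENNReal) ^ (-1 : ℤ) * (p : ENNReal) ^ (-((m * n : ℕ) : ℤ)) := by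
    rw [← ENNReal.zpow_add pq_ne_zero pq_ne_top]
    congr 1
    push_cast
    ring
  rw [hzpow]
  ring

lemma R2 (hn : 2 ≤ n) (m : ℕ) (hm : 1 ≤ m) :
    padicHaar p n (Bset f g a (m + 1) (m + 1))
      = (p : ENNReal) ^ (-2 : ℤ) * padicHaar p n (Bset f g a m m) := by
  classical
  set S := red m '' Bset f g a m m with hS
  have hpre : Bset f g a m m = red m ⁻¹' S := B_eq_preimage hm le_rfl
  have hsub : Bset f g a (m + 1) (m + 1) ⊆ Bset f g a m m := fun x hx =>
    ⟨hx.1, dvd_trans (pow_dvd_pow _ (Nat.le_succ m)) hx.2.1,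
      dvd_trans (pow_dvd_pow _ (Nat.le_succ m)) hx.2.2⟩
  have hdecomp : Bset f g a (m + 1) (m + 1)
      = ⋃ c ∈ (Set.toFinite S).toFinset, ({x | red m x = c} ∩ Bset f g a (m + 1) (m + 1)) := by
    ext x
    simp only [Set.mem_iUnion, Set.Finite.mem_toFinset, Set.mem_inter_iff, Set.mem_setOf_eq,
      exists_prop]
    constructor
    · intro hx
      exact ⟨red m x, ⟨x, hsub hx, rfl⟩, rfl, hx⟩
    · rintro ⟨c, _, _, hx⟩
      exact hx
  have hpiece : ∀ c ∈ S, padicHaar p n ({x | red m x = c} ∩ Bset f g a (m + 1) (m + 1))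
      = (p : ENNReal) ^ ((n : ℤ) - (2 : ℤ) - (((m + 1) * n : ℕ) : ℤ)) := by
    rintro c ⟨x₀, hx₀, rfl⟩
    obtain ⟨uf, huf⟩ := hx₀.2.1
    obtain ⟨ug, hug⟩ := hx₀.2.2
    have hseteq : {x | red m x = red m x₀} ∩ Bset f g a (m + 1) (m + 1)
        = {x | red m x = red m x₀
            ∧ ∀ s : Fin 2, (p : ℤ_[p]) ^ (m + 1) ∣ eval x (![f, g] s)} := by
      ext x
      simp only [Set.mem_inter_iff, Set.mem_setOf_eq]
      constructor
      · rintro ⟨h1, h2⟩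
        refine ⟨h1, fun s => ?_⟩
        fin_cases s
        · simpa using h2.2.1
        · simpa using h2.2.2
      · rintro ⟨h1, h2⟩
        have hmem : x ∈ Bset f g a m m := mem_of_red_eq hm le_rfl hx₀ h1
        refine ⟨h1, hmem.1, ?_, ?_⟩
        · simpa using h2 0
        · simpa using h2 1
    rw [hseteq]
    exact step 2 hn ![f, g] m hm x₀ ![uf, ug]
      (fun s => by fin_cases s <;> simpa using (by first | exact huf | exact hug))
      (surj2_at hrank x₀ hx₀.1)
  have hdisj : Set.PairwiseDisjoint ((Set.toFinite S).toFinset : Set (Fin n → ZMod (p ^ m)))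
      (fun c => {x | red m x = c} ∩ Bset f g a (m + 1) (m + 1)) := by
    intro c hc d hd hcd
    refine Set.disjoint_left.2 fun x hx hx' => hcd ?_
    exact hx.1.symm.trans hx'.1
  have hmeas : ∀ c ∈ (Set.toFinite S).toFinset,
      MeasurableSet ({x : Fin n → ℤ_[p] | red m x = c} ∩ Bset f g a (m + 1) (m + 1)) :=
    fun c _ => (measurableSet_fiber m c).inter (measurable_B (by omega) le_rfl)
  rw [hdecomp, measure_biUnion_finset hdisj hmeas]
  rw [Finset.sum_congr rfl (fun c hc => hpiece c ((Set.Finite.mem_toFinset _).1 hc)),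
    Finset.sum_const]
  have hcard : (Set.toFinite S).toFinset.card = Nat.card S := by
    rw [Nat.card_coe_set_eq, Set.ncard_eq_toFinset_card S (Set.toFinite S)]
  rw [hcard, hpre, measure_preimage, nsmul_eq_mul]
  have hzpow : (p : ENNReal) ^ ((n : ℤ) - (2 : ℤ) - (((m + 1) * n : ℕ) : ℤ))
      = (p : ENNReal) ^ (-2 : ℤ) * (p : ENNReal) ^ (-((m * n : ℕ) : ℤ)) := by
    rw [← ENNReal.zpow_add pq_ne_zero pq_ne_top]
    congr 1
    push_cast
    ring
  rw [hzpow]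
  ring

end rank

lemma base (hfa : (p : ℤ_[p]) ∣ eval a f) (hga : (p : ℤ_[p]) ∣ eval a g) :
    padicHaar p n (Bset f g a 1 1) = (p : ENNReal) ^ (-((1 * n : ℕ) : ℤ)) := by
  have hset : Bset f g a 1 1 = {x | red 1 x = red 1 a} := by
    ext x
    simp only [Set.mem_setOf_eq]
    constructor
    · intro hx
      rw [red_eq_iff]
      intro i
      rw [pow_one]
      exact hx.1 i
    · intro hx
      rw [red_eq_iff] at hx
      have hxa : ∀ i, (p : ℤ_[p]) ∣ x i - a i := by
        intro i
        have := hx i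
        rwa [pow_one] at this
      refine ⟨hxa, ?_, ?_⟩
      · rw [pow_one]
        have h1 : (p : ℤ_[p]) ∣ eval x f - eval a f := by
          have := eval_congr_dvd 1 x a hx f
          rwa [pow_one] at this
        have := dvd_add h1 hfa
        rwa [sub_add_cancel] at this
      · rw [pow_one]
        have h1 : (p : ℤ_[p]) ∣ eval x g - eval a g := by
          have := eval_congr_dvd 1 x a hx g
          rwa [pow_one] at this
        have := dvd_add h1 hga
        rwa [sub_add_cancel] at this
  rw [hset]
  exact measure_fiber 1 (red 1 a)

section final
variable (hfa : (p : ℤ_[p]) ∣ eval a f) (hga : (p : ℤ_[p]) ∣ eval a g)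
variable (hrank : Matrix.rank (Matrix.of fun (i : Fin 2) (j : Fin n) =>
      PadicInt.toZMod (eval a (pderiv j (![f, g] i)))) = 2)
include hfa hga hrank

lemma diag (hn : 2 ≤ n) : ∀ j, 1 ≤ j →
    padicHaar p n (Bset f g a j j) = (p : ENNReal) ^ (2 - (n : ℤ) - 2 * (j : ℤ)) := by
  intro j hj
  induction j with
  | zero => omega
  | succ j ih =>
    by_cases hj0 : j = 0
    · subst hj0
      rw [base hfa hga]
      congr 1
      push_cast
      ring
    · have h1 : 1 ≤ j := by omega
      rw [R2 hrank hn j h1, ih h1, ← ENNReal.zpow_add pq_ne_zero pq_ne_top]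
      congr 1
      push_cast
      ring

lemma up (hn : 2 ≤ n) (l : ℕ) (hl : 1 ≤ l) : ∀ d,
    padicHaar p n (Bset f g a (l + d) l)
      = (p : ENNReal) ^ (2 - (n : ℤ) - ((l : ℤ) + (d : ℤ)) - (l : ℤ)) := by
  intro d
  induction d with
  | zero =>
    rw [add_zero, diag hfa hga hrank hn l hl]
    congr 1
    push_cast
    ring
  | succ d ih =>
    have heq : l + (d + 1) = (l + d) + 1 := by omega
    rw [heq, R1 hrank (by omega) (l + d) l hl (Nat.le_add_right l d), ih,
      ← ENNReal.zpow_add pq_ne_zero pq_ne_top]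
    congr 1
    push_cast
    ring

lemma final (hn : 2 ≤ n) (k l : ℕ) (hl : 1 ≤ l) (hkl : l ≤ k) :
    padicHaar p n (Bset f g a k l)
      = (p : ENNReal) ^ (-(n : ℤ) - (k : ℤ) - (l : ℤ) + 2) := by
  have hk' : l + (k - l) = k := by omega
  rw [show Bset f g a k l = Bset f g a (l + (k - l)) l from by rw [hk']]
  rw [up hfa hga hrank hn l hl (k - l)]
  congr 1
  have : ((k - l : ℕ) : ℤ) = (k : ℤ) - (l : ℤ) := by
    push_cast [Nat.cast_sub hkl]
    ring
  rw [this]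
  ring

end final

end main
end Akl

theorem measure_Akl (p : ℕ) [Fact p.Prime] (n : ℕ) (hn : 2 ≤ n)
    (f g : MvPolynomial (Fin n) ℤ_[p]) (k l : ℕ) (hk : 1 ≤ l) (hkl : l ≤ k)
    (a : Fin n → ℤ_[p])
    (hfa : (p : ℤ_[p]) ∣ eval a f) (hga : (p : ℤ_[p]) ∣ eval a g)
    (hrank : Matrix.rank (Matrix.of fun (i : Fin 2) (j : Fin n) =>
      PadicInt.toZMod (eval a (pderiv j (![f, g] i)))) = 2) :
    padicHaar p n {x : Fin n → ℤ_[p] | (∀ i, (p : ℤ_[p]) ∣ (x i - a i)) ∧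
        (p : ℤ_[p]) ^ k ∣ eval x f ∧ (p : ℤ_[p]) ^ l ∣ eval x g}
      = (p : ENNReal) ^ (-(n : ℤ) - (k : ℤ) - (l : ℤ) + 2) :=
  Akl.final hfa hga hrank hn k l hk hkl
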